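/- Let p_1, …, p_n be a 1.5D terrain and let a ≺ b ≺ c ≺ d be four of its vertices in left-right order. If a and c see each other, and b and d see each other, then a and d see each other. -/

import Mathlib

/-- A 1.5D terrain: points `p_1, …, p_n` in the plane with strictly increasing
`x`-coordinates. -/
structure Terrain (n : ℕ) where
  pt : Fin n → ℝ × ℝ
  xmono : StrictMono fun i : Fin n => (pt i).1

/-- Vertices `i` and `j` of a terrain see each other: they are distinct and every terrain
vertex between them lies on or below the closed segment joining them. -/
def Terrain.Sees {n : ℕ} (T : Terrain n) (i j : Fin n) : Prop :=
  i ≠ j ∧ ∀ k : Fin n, min i j ≤ k → k ≤ max i j →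
    ∃ z ∈ segment ℝ (T.pt (min i j)) (T.pt (max i j)),
      z.1 = (T.pt k).1 ∧ (T.pt k).2 ≤ z.2

/-- The visibility graph of a terrain. -/
def Terrain.visibilityGraph {n : ℕ} (T : Terrain n) : SimpleGraph (Fin n) where
  Adj i j := T.Sees i j
  symm := by
    constructor
    intro i j h
    refine ⟨h.1.symm, ?_⟩
    rw [min_comm j i, max_comm j i]
    exact h.2
  loopless := ⟨fun i h => h.1 rfl⟩


lemma sees_iff_det {n : ℕ} (T : Terrain n) {i j : Fin n} (hij : i < j) :
    T.Sees i j ↔ ∀ k : Fin n, i ≤ k → k ≤ j →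
      ((T.pt j).1 - (T.pt i).1) * (T.pt k).2 ≤
        ((T.pt j).1 - (T.pt k).1) * (T.pt i).2 + ((T.pt k).1 - (T.pt i).1) * (T.pt j).2 := by
  have hmin : min i j = i := min_eq_left hij.le
  have hmax : max i j = j := max_eq_right hij.le
  have hx : (T.pt i).1 < (T.pt j).1 := T.xmono hij
  constructor
  · rintro ⟨-, h⟩ k hik hkj
    rw [hmin, hmax] at h
    obtain ⟨z, hz, hz1, hz2⟩ := h k hik hkj
    obtain ⟨u, v, hu, hv, huv, hz'⟩ := hz
    have h1 : u * (T.pt i).1 + v * (T.pt j).1 = z.1 := by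
      rw [← hz']; simp [Prod.smul_def, smul_eq_mul]
    have h2 : u * (T.pt i).2 + v * (T.pt j).2 = z.2 := by
      rw [← hz']; simp [Prod.smul_def, smul_eq_mul]
    have hu' : u = 1 - v := by linarith
    subst hu'
    have hk1 : (T.pt k).1 = (1 - v) * (T.pt i).1 + v * (T.pt j).1 := by rw [h1, hz1]
    have h3 : ((T.pt j).1 - (T.pt i).1) * (T.pt k).2 ≤
        ((T.pt j).1 - (T.pt i).1) * z.2 :=
      mul_le_mul_of_nonneg_left hz2 (by linarith)
    have h4 : ((T.pt j).1 - (T.pt i).1) * z.2 =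
        ((T.pt j).1 - (T.pt k).1) * (T.pt i).2 + ((T.pt k).1 - (T.pt i).1) * (T.pt j).2 := by
      rw [← h2, hk1]; ring
    linarith
  · intro h
    refine ⟨hij.ne, ?_⟩
    rw [hmin, hmax]
    intro k hik hkj
    have hxik : (T.pt i).1 ≤ (T.pt k).1 := T.xmono.monotone hik
    have hxkj : (T.pt k).1 ≤ (T.pt j).1 := T.xmono.monotone hkj
    set t := ((T.pt k).1 - (T.pt i).1) / ((T.pt j).1 - (T.pt i).1) with ht
    have hxne : (T.pt j).1 - (T.pt i).1 ≠ 0 := by linarith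
    have ht0 : 0 ≤ t := div_nonneg (by linarith) (by linarith)
    have ht1 : t ≤ 1 := (div_le_one (by linarith)).2 (by linarith)
    have htx : t * ((T.pt j).1 - (T.pt i).1) = (T.pt k).1 - (T.pt i).1 :=
      div_mul_cancel₀ _ hxne
    refine ⟨(1 - t) • T.pt i + t • T.pt j, ⟨1 - t, t, by linarith, ht0, by ring, rfl⟩, ?_, ?_⟩
    · simp [Prod.smul_def, smul_eq_mul]
      nlinarith [htx]
    · have hz2 : ((1 - t) • T.pt i + t • T.pt j).2 =
          (1 - t) * (T.pt i).2 + t * (T.pt j).2 := by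
        simp [Prod.smul_def, smul_eq_mul]
      rw [hz2]
      have h5 : ((T.pt j).1 - (T.pt i).1) * ((1 - t) * (T.pt i).2 + t * (T.pt j).2) =
          ((T.pt j).1 - (T.pt k).1) * (T.pt i).2 + ((T.pt k).1 - (T.pt i).1) * (T.pt j).2 := by
        linear_combination ((T.pt j).2 - (T.pt i).2) * htx
      have h6 := h k hik hkj
      rw [← h5] at h6
      exact le_of_mul_le_mul_left h6 (by linarith)

/-- Order Claim: if `a ≺ b ≺ c ≺ d` are vertices of a 1.5D terrain, `a`
sees `c`, and `b` sees `d`, then `a` sees `d`. -/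
theorem stmt13 (n : ℕ) (T : Terrain n) (a b c d : Fin n)
    (hab : a < b) (hbc : b < c) (hcd : c < d)
    (hac : T.Sees a c) (hbd : T.Sees b d) : T.Sees a d := by
  set xa := (T.pt a).1; set ya := (T.pt a).2
  set xb := (T.pt b).1; set yb := (T.pt b).2
  set xc := (T.pt c).1; set yc := (T.pt c).2
  set xd := (T.pt d).1; set yd := (T.pt d).2
  have had : a < d := (hab.trans hbc).trans hcd
  have Hac := (sees_iff_det T (hab.trans hbc)).mp hac
  have Hbd := (sees_iff_det T (hbc.trans hcd)).mp hbd
  have hxab : xa < xb := T.xmono hab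
  have hxbc : xb < xc := T.xmono hbc
  have hxcd : xc < xd := T.xmono hcd
  have e1 : (xc - xa) * yb ≤ (xc - xb) * ya + (xb - xa) * yc :=
    Hac b hab.le hbc.le
  have e2 : (xd - xb) * yc ≤ (xd - xc) * yb + (xc - xb) * yd :=
    Hbd c hbc.le hcd.le
  -- C lies below line AD
  have hC : (xd - xa) * yc ≤ (xd - xc) * ya + (xc - xa) * yd := by
    have key : (xc - xb) * ((xd - xa) * yc - (xd - xc) * ya - (xc - xa) * yd) =
        (xd - xc) * ((xc - xa) * yb - (xc - xb) * ya - (xb - xa) * yc) +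
        (xc - xa) * ((xd - xb) * yc - (xd - xc) * yb - (xc - xb) * yd) := by ring
    nlinarith [key, mul_nonneg (by linarith : (0:ℝ) ≤ xd - xc) (by linarith : (0:ℝ) ≤ (xc - xb) * ya + (xb - xa) * yc - (xc - xa) * yb),
      mul_nonneg (by linarith : (0:ℝ) ≤ xc - xa) (by linarith : (0:ℝ) ≤ (xd - xc) * yb + (xc - xb) * yd - (xd - xb) * yc)]
  -- B lies below line AD
  have hB : (xd - xa) * yb ≤ (xd - xb) * ya + (xb - xa) * yd := by
    have key : (xc - xb) * ((xd - xa) * yb - (xd - xb) * ya - (xb - xa) * yd) =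
        (xd - xb) * ((xc - xa) * yb - (xc - xb) * ya - (xb - xa) * yc) +
        (xb - xa) * ((xd - xb) * yc - (xd - xc) * yb - (xc - xb) * yd) := by ring
    nlinarith [key, mul_nonneg (by linarith : (0:ℝ) ≤ xd - xb) (by linarith : (0:ℝ) ≤ (xc - xb) * ya + (xb - xa) * yc - (xc - xa) * yb),
      mul_nonneg (by linarith : (0:ℝ) ≤ xb - xa) (by linarith : (0:ℝ) ≤ (xd - xc) * yb + (xc - xb) * yd - (xd - xb) * yc)]
  refine (sees_iff_det T had).mpr ?_
  intro k hak hkd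
  set xk := (T.pt k).1; set yk := (T.pt k).2
  have hxak : xa ≤ xk := T.xmono.monotone hak
  have hxkd : xk ≤ xd := T.xmono.monotone hkd
  by_cases hkc : k ≤ c
  · have ek : (xc - xa) * yk ≤ (xc - xk) * ya + (xk - xa) * yc := Hac k hak hkc
    have key : (xc - xa) * ((xd - xa) * yk - (xd - xk) * ya - (xk - xa) * yd) =
        (xd - xa) * ((xc - xa) * yk - (xc - xk) * ya - (xk - xa) * yc) +
        (xk - xa) * ((xd - xa) * yc - (xd - xc) * ya - (xc - xa) * yd) := by ring
    nlinarith [key, mul_nonneg (by linarith : (0:ℝ) ≤ xd - xa) (by linarith : (0:ℝ) ≤ (xc - xk) * ya + (xk - xa) * yc - (xc - xa) * yk),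
      mul_nonneg (by linarith : (0:ℝ) ≤ xk - xa) (by linarith : (0:ℝ) ≤ (xd - xc) * ya + (xc - xa) * yd - (xd - xa) * yc)]
  · have hbk : b ≤ k := (hbc.trans (lt_of_not_ge hkc)).le
    have hxbk : xb ≤ xk := T.xmono.monotone hbk
    have ek : (xd - xb) * yk ≤ (xd - xk) * yb + (xk - xb) * yd := Hbd k hbk hkd
    have key : (xd - xb) * ((xd - xa) * yk - (xd - xk) * ya - (xk - xa) * yd) =
        (xd - xa) * ((xd - xb) * yk - (xd - xk) * yb - (xk - xb) * yd) +
        (xd - xk) * ((xd - xa) * yb - (xd - xb) * ya - (xb - xa) * yd) := by ring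
    nlinarith [key, mul_nonneg (by linarith : (0:ℝ) ≤ xd - xa) (by linarith : (0:ℝ) ≤ (xd - xk) * yb + (xk - xb) * yd - (xd - xb) * yk),
      mul_nonneg (by linarith : (0:ℝ) ≤ xd - xk) (by linarith : (0:ℝ) ≤ (xd - xb) * ya + (xb - xa) * yd - (xd - xa) * yb)]
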